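/- Let G be a finite group, N a nonabelian minimal normal subgroup, and suppose some nontrivial χ ∈ Irr(N) extends to a character ψ ∈ Irr(G) with ker(ψ) = 1. If cod(G) = cod(G/N), then we reach a contradiction: cod(ψ) = |G/N|·|N|/χ(1) does not divide |G/N|, yet every element of cod(G/N) divides |G/N|. -/

import Mathlib

/-- The codegree of (the character of) a representation `V` of `G`:
`|G : ker χ| / χ(1)` as a rational number. -/
noncomputable def codegree {G : Type} [Group G] (V : FDRep ℂ G) : ℚ :=
  (Nat.card G : ℚ) / ((Nat.card V.ρ.ker : ℚ) * (Module.finrank ℂ V : ℚ))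

/-- The codegree set of `G`: codegrees of all irreducible complex characters. -/
noncomputable def codSet (G : Type) [Group G] : Set ℚ :=
  {c | ∃ V : FDRep ℂ G, CategoryTheory.Simple V ∧ codegree V = c}

open CategoryTheory Module

section Aux

variable {H : Type} [Group H] (V : FDRep ℂ H)

noncomputable def subrep (p : Submodule ℂ V) (hp : ∀ (h : H) v, v ∈ p → V.ρ h v ∈ p) : FDRep ℂ H :=
  FDRep.of (V := p)
    { toFun := fun h => LinearMap.restrict (V.ρ h) (hp h)
      map_one' := by ext x; simp [LinearMap.restrict_apply]
      map_mul' := fun g h => by ext x; simp [LinearMap.restrict_apply] }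

noncomputable def incl (p : Submodule ℂ V) (hp : ∀ (h : H) v, v ∈ p → V.ρ h v ∈ p) :
    subrep V p hp ⟶ V where
  hom := FGModuleCat.ofHom p.subtype
  comm := fun g => by ext x; rfl

lemma dichotomy (hV : Simple V) (p : Submodule ℂ V) (hp : ∀ (h : H) v, v ∈ p → V.ρ h v ∈ p) :
    p = ⊥ ∨ p = ⊤ := by
  by_cases hb : p = ⊥
  · exact Or.inl hb
  right
  have hne : incl V p hp ≠ 0 := by
    obtain ⟨x, hx0⟩ := Submodule.exists_mem_ne_zero_of_ne_bot hb
    intro h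
    apply hx0.2
    have := congrArg (fun f : subrep V p hp ⟶ V => f.hom ⟨x, hx0.1⟩) h
    exact this
  have hmono : Mono (incl V p hp) := by
    constructor
    intro Z f g hfg
    ext z
    have := congrArg (fun f : Z ⟶ V => f.hom z) hfg
    simp only [Action.comp_hom] at this
    have h2 : p.subtype (f.hom z) = p.subtype (g.hom z) := by rw [ConcreteCategory.comp_apply, ConcreteCategory.comp_apply] at this; exact this
    exact Subtype.ext h2
  have hiso : IsIso (incl V p hp) := (Simple.mono_isIso_iff_nonzero (incl V p hp)).mpr hne
  rw [Submodule.eq_top_iff']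
  intro x
  have h1 : (CategoryTheory.inv (incl V p hp) ≫ incl V p hp).hom x = x := by
    rw [IsIso.inv_hom_id]; rfl
  rw [Action.comp_hom] at h1
  set y : p := (CategoryTheory.inv (incl V p hp)).hom x with hy
  have : (y : V) = x := by rw [ConcreteCategory.comp_apply] at h1; exact h1
  rw [← this]; exact y.2

lemma simple_finrank_pos (hV : Simple V) : 0 < finrank ℂ V := by
  rw [finrank_pos_iff]
  by_contra h
  rw [not_nontrivial_iff_subsingleton] at h
  have : 𝟙 V = 0 := by
    apply Action.Hom.ext
    ext x
    exact @Subsingleton.elim _ h _ _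
  exact (CategoryTheory.id_nonzero V) this

lemma key_lt [Fintype H] (hV : Simple V) (hker : V.ρ.ker ≠ ⊤) :
    finrank ℂ V < Fintype.card H := by
  classical
  have hnt : Nontrivial V := finrank_pos_iff.mp (simple_finrank_pos V hV)
  obtain ⟨v, hv⟩ := exists_ne (0 : V)
  -- invariants are trivial
  have hinv : Representation.invariants V.ρ = ⊥ := by
    rcases dichotomy V hV (Representation.invariants V.ρ)
      (fun h w hw => by
        rw [Representation.mem_invariants] at hw ⊢
        intro g
        rw [hw h]
        exact hw g) with h | h
    · exact h
    · exfalso; apply hker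
      rw [Subgroup.eq_top_iff']
      intro g
      rw [MonoidHom.mem_ker]
      apply LinearMap.ext
      intro w
      have : w ∈ Representation.invariants V.ρ := h ▸ Submodule.mem_top
      exact (Representation.mem_invariants _ _).mp this g
  -- the averaged vector is invariant, hence zero
  have hsum : (∑ h : H, V.ρ h v) = 0 := by
    have hmem : (∑ h : H, V.ρ h v) ∈ Representation.invariants V.ρ := by
      rw [Representation.mem_invariants]
      intro g
      rw [map_sum]
      refine Fintype.sum_equiv (Equiv.mulLeft g) _ _ (fun h => ?_)
      show V.ρ g (V.ρ h v) = V.ρ ((Equiv.mulLeft g) h) v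
      show V.ρ g (V.ρ h v) = V.ρ (g * h) v
      rw [map_mul]
      rfl
    rw [hinv] at hmem
    simpa using hmem
  -- the span of the orbit is everything
  set p : Submodule ℂ V := Submodule.span ℂ (Set.range fun h : H => V.ρ h v) with hpdef
  have hp : ∀ (h : H) w, w ∈ p → V.ρ h w ∈ p := by
    intro h w hw
    induction hw using Submodule.span_induction with
    | mem x hx =>
        obtain ⟨g, rfl⟩ := hx
        apply Submodule.subset_span
        exact ⟨h * g, by show V.ρ (h * g) v = _; rw [map_mul]; rfl⟩
    | zero => simp
    | add x y _ _ hx hy => rw [map_add]; exact p.add_mem hx hy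
    | smul c x _ hx => rw [map_smul]; exact p.smul_mem c hx
  have hptop : p = ⊤ := by
    rcases dichotomy V hV p hp with h | h
    · exfalso
      apply hv
      have : v ∈ p := Submodule.subset_span ⟨1, by simp⟩
      rw [h] at this
      simpa using this
    · exact h
  -- but the orbit is linearly dependent
  set t : Finset (CoeSort.coe V) := (Finset.univ.erase (1 : H)).image (fun h : H => V.ρ h v) with htdef
  have hple : p ≤ Submodule.span ℂ (t : Set V) := by
    rw [hpdef, Submodule.span_le]
    rintro _ ⟨g, rfl⟩
    by_cases hg : g = 1
    · subst hg
      show V.ρ (1 : H) v ∈ _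
      have h1 : V.ρ (1 : H) v = v := by simp
      rw [h1]
      have : v = -∑ h ∈ Finset.univ.erase (1 : H), V.ρ h v := by
        have h0 := Finset.add_sum_erase Finset.univ (fun h : H => V.ρ h v) (Finset.mem_univ 1)
        rw [hsum] at h0
        have h2 : v + ∑ x ∈ Finset.univ.erase (1 : H), V.ρ x v = 0 := by simpa using h0
        linear_combination (norm := module) h2
      rw [this]
      apply Submodule.neg_mem
      apply Submodule.sum_mem
      intro h hh
      apply Submodule.subset_span
      exact Finset.mem_image_of_mem _ hh
    · apply Submodule.subset_span
      exact Finset.mem_image_of_mem _ (Finset.mem_erase.mpr ⟨hg, Finset.mem_univ g⟩)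
  have : finrank ℂ V ≤ t.card := by
    have h1 : Submodule.span ℂ (t : Set V) = ⊤ := top_le_iff.mp (hptop ▸ hple)
    calc finrank ℂ V = finrank ℂ (⊤ : Submodule ℂ V) := (finrank_top ℂ _).symm
      _ = finrank ℂ (Submodule.span ℂ (t : Set V)) := by rw [h1]
      _ ≤ t.card := finrank_span_finset_le_card (M := V.V) t
  calc finrank ℂ V ≤ t.card := this
    _ ≤ (Finset.univ.erase (1 : H)).card := Finset.card_image_le
    _ < Fintype.card H := by
        rw [Finset.card_erase_of_mem (Finset.mem_univ 1), Finset.card_univ]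
        have : 0 < Fintype.card H := Fintype.card_pos
        omega

end Aux

theorem no_faithful_extension_of_nonabelian_minimal_normal {G : Type} [Group G] [Fintype G]
    (N : Subgroup G) [N.Normal] (hbot : N ≠ ⊥)
    (hmin : ∀ M : Subgroup G, M.Normal → M ≤ N → M = ⊥ ∨ M = N)
    (hna : ∃ a b : ↥N, a * b ≠ b * a)
    (χ : FDRep ℂ ↥N) (hχ : CategoryTheory.Simple χ) (hχnt : χ.ρ.ker ≠ ⊤)
    (ψ : FDRep ℂ G) (hψ : CategoryTheory.Simple ψ) (hfaith : ψ.ρ.ker = ⊥)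
    -- `ψ` extends `χ`
    (hext : ∀ n : ↥N, ψ.character (n : G) = χ.character n)
    (hcod : codSet G = codSet (G ⧸ N)) :
    False := by
  classical
  have hNfin : Fintype ↥N := Fintype.ofFinite _
  -- dimensions agree
  have hd : finrank ℂ ψ = finrank ℂ χ := by
    have h1 := hext 1
    rw [Subgroup.coe_one, FDRep.char_one, FDRep.char_one] at h1
    exact_mod_cast h1
  -- codegree of ψ lies in codSet (G ⧸ N)
  have hmem : codegree ψ ∈ codSet (G ⧸ N) := by
    rw [← hcod]; exact ⟨ψ, hψ, rfl⟩
  obtain ⟨W, hW, hWeq⟩ := hmem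
  -- abbreviations
  set nG := Nat.card G with hnG
  set nH := Nat.card (G ⧸ N) with hnH
  set nN := Nat.card ↥N with hnN
  set kW := Nat.card W.ρ.ker with hkW
  set dW := finrank ℂ W with hdW
  set dχ := finrank ℂ χ with hdχ
  have hdWpos : 0 < dW := simple_finrank_pos W hW
  have hdχpos : 0 < dχ := simple_finrank_pos χ hχ
  have hkWpos : 0 < kW := Nat.card_pos
  have hnHpos : 0 < nH := Nat.card_pos
  have hnGeq : nG = nH * nN := Subgroup.card_eq_card_quotient_mul_card_subgroup N
  -- turn the rational equation into a natural number equation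
  have heq : nH * (1 * dχ) = nG * (kW * dW) := by
    unfold codegree at hWeq
    rw [hfaith, Subgroup.card_bot] at hWeq
    rw [hd] at hWeq
    rw [div_eq_div_iff (by positivity) (by positivity)] at hWeq
    exact_mod_cast hWeq
  rw [one_mul, hnGeq, mul_assoc] at heq
  have heq2 : dχ = nN * (kW * dW) := Nat.eq_of_mul_eq_mul_left hnHpos heq
  -- so dχ ≥ nN
  have hge : nN ≤ dχ := by
    rw [heq2]
    exact Nat.le_mul_of_pos_right nN (Nat.mul_pos hkWpos hdWpos)
  -- but dχ < nN by the key lemma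
  have hlt : dχ < nN := by
    rw [hnN, Nat.card_eq_fintype_card]
    exact key_lt χ hχ hχnt
  omega
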